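/- SCC^cof implies SCC^split: if for every countable M ≺ (H_θ, ∈, Δ) and every β < ω₂ there is a countable M' with M ⊑ M' ≺ (H_θ, ∈, Δ) and sup(M' ∩ ω₂) ≥ β, then for every countable M ≺ (H_θ, ∈, Δ) there exist countable M₀, M₁ with M ⊑ Mᵢ ≺ (H_θ, ∈, Δ) for i ∈ {0,1} such that M₀ ∩ ω₂ and M₁ ∩ ω₂ are ⊆-incomparable. -/

import Mathlib

open FirstOrder Set

noncomputable def ω1 : Ordinal := (Cardinal.aleph 1).ord
noncomputable def ω2 : Ordinal := (Cardinal.aleph 2).ord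

/-- The trace of `M ⊆ H` on the ordinals below `γ`, where `oe : Ordinal → H` is the
identification of (set-theoretic) ordinals with elements of `H = H_θ`. -/
def otr {H : Type*} (oe : Ordinal → H) (γ : Ordinal) (M : Set H) : Set Ordinal :=
  {α | α < γ ∧ oe α ∈ M}

/-- `M` is (the underlying set of) an elementary substructure, w.r.t. the structure `st`. -/
def IsElemSetOf (L : FirstOrder.Language) {H : Type*} (st : L.Structure H) (M : Set H) : Prop :=
  letI := st
  ∃ S : L.ElementarySubstructure H, (S : Set H) = M

/-- The language with two binary relation symbols (for `∈` and a wellorder `Δ`). -/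
def setLang : FirstOrder.Language where
  Functions := fun _ => Empty
  Relations := fun n => match n with | 2 => Bool | _ => Empty

/-- The structure `(H, ∈, Δ)` for `setLang`. -/
def setStruct {H : Type*} (mem Δ : H → H → Prop) : setLang.Structure H where
  funMap := fun f _ => f.elim
  RelMap := fun {n} =>
    match n with
    | 0 => fun r _ => r.elim
    | 1 => fun r _ => r.elim
    | 2 => fun b x => cond (show Bool from b) (mem (x 0) (x 1)) (Δ (x 0) (x 1))
    | _ + 3 => fun r _ => r.elim

/-- The language with one binary relation symbol (for `∈`). -/
def memLang : FirstOrder.Language where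
  Functions := fun _ => Empty
  Relations := fun n => match n with | 2 => Unit | _ => Empty

/-- The structure `(H, ∈)` for `memLang`. -/
def memStruct {H : Type*} (mem : H → H → Prop) : memLang.Structure H where
  funMap := fun f _ => f.elim
  RelMap := fun {n} =>
    match n with
    | 0 => fun r _ => r.elim
    | 1 => fun r _ => r.elim
    | 2 => fun _ x => mem (x 0) (x 1)
    | _ + 3 => fun r _ => r.elim

/-- `M ⊑ N` : `M ⊆ N` and `M ∩ ω₁ = N ∩ ω₁`. -/
def sqle {H : Type*} (oe : Ordinal → H) (M N : Set H) : Prop :=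
  M ⊆ N ∧ otr oe ω1 M = otr oe ω1 N

/-- `A` is an initial segment of `B` (as sets of ordinals). -/
def InitialSegOf (A B : Set Ordinal) : Prop :=
  A ⊆ B ∧ ∀ b ∈ B, ∀ a ∈ A, b < a → b ∈ A

/-- `X` is a Chang set: `|X ∩ ω₂| = ω₁` and `X ∩ ω₁` is a countable ordinal. -/
def Chang {H : Type*} (oe : Ordinal → H) (X : Set H) : Prop :=
  Cardinal.mk ↥(otr oe ω2 X) = Cardinal.aleph 1 ∧ ∃ δ, δ < ω1 ∧ otr oe ω1 X = Set.Iio δ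

universe u_chain in
/-- An `ω₁`-length iteration: `chainB h0 ν` is the supremum of `h0 (chainB h0 μ)` over `μ < ν`. -/
noncomputable def chainB (h0 : Ordinal.{u_chain} → Ordinal.{u_chain}) :
    Ordinal.{u_chain} → Ordinal.{u_chain} :=
  Ordinal.lt_wf.fix fun ν ih => Ordinal.bsup.{u_chain, u_chain} ν fun μ hμ => h0 (ih μ hμ)

universe u_chain in
theorem chainB_eq (h0 : Ordinal.{u_chain} → Ordinal.{u_chain}) (ν : Ordinal.{u_chain}) :
    chainB h0 ν = Ordinal.bsup.{u_chain, u_chain} ν (fun μ _ => h0 (chainB h0 μ)) :=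
  Ordinal.lt_wf.fix_eq _ ν

/-- The supremum of a countable set of ordinals below an ordinal of uncountable cofinality
stays below. -/
theorem sSup_lt_of_countable {o : Ordinal} (ho : Cardinal.aleph0 < o.cof)
    {S : Set Ordinal} (hS : S.Countable) (hlt : ∀ x ∈ S, x < o) : sSup S < o := by
  have hpos : 0 < o := by
    rcases (zero_le (a := o)).eq_or_lt with rfl | h
    · rw [Ordinal.cof_zero] at ho
      exact absurd ho (Cardinal.zero_le _).not_gt
    · exact h
  rcases S.eq_empty_or_nonempty with rfl | hne
  · simpa [csSup_empty] using hpos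
  · obtain ⟨f, rfl⟩ := hS.exists_eq_range hne
    have h1 : iSup f < o := by
      apply Ordinal.iSup_lt_ord_lift _ (fun n => hlt _ (Set.mem_range_self n))
      rwa [Cardinal.mk_nat, Cardinal.lift_aleph0]
    exact h1

theorem lt_add_one_ord (x : Ordinal) : x < x + 1 := by
  rw [Ordinal.add_one_eq_succ]; exact Order.lt_succ x

/-- `SCC^cof` implies `SCC^split`. -/
theorem stmt_2 {H : Type*} (mem Δ : H → H → Prop) (hΔ : IsWellOrder H Δ)
    (oe : Ordinal → H) (hoe : Function.Injective oe)
    (hcof : ∀ M : Set H, M.Countable → IsElemSetOf setLang (setStruct mem Δ) M →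
      ∀ β, β < ω2 → ∃ M' : Set H, M'.Countable ∧ IsElemSetOf setLang (setStruct mem Δ) M' ∧
        sqle oe M M' ∧ β ≤ sSup (otr oe ω2 M')) :
    ∀ M : Set H, M.Countable → IsElemSetOf setLang (setStruct mem Δ) M →
      ∃ M₀ M₁ : Set H, M₀.Countable ∧ M₁.Countable ∧
        IsElemSetOf setLang (setStruct mem Δ) M₀ ∧ IsElemSetOf setLang (setStruct mem Δ) M₁ ∧
        sqle oe M M₀ ∧ sqle oe M M₁ ∧
        ¬ otr oe ω2 M₀ ⊆ otr oe ω2 M₁ ∧ ¬ otr oe ω2 M₁ ⊆ otr oe ω2 M₀ := by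
  classical
  intro M hMc hMe
  choose! F hFc hFe hFsq hFsup using hcof M hMc hMe
  -- basic cardinal facts
  have h2succ : (Cardinal.aleph 2) = Order.succ (Cardinal.aleph 1) := by
    rw [show (2 : Ordinal) = Order.succ 1 by
      rw [← Ordinal.add_one_eq_succ, one_add_one_eq_two], Cardinal.aleph_succ]
  have hreg2 : (Cardinal.aleph 2).IsRegular := by
    rw [h2succ]; exact Cardinal.isRegular_succ (Cardinal.aleph0_le_aleph 1)
  have hcof2 : ω2.cof = Cardinal.aleph 2 := hreg2.cof_eq
  have hcof1 : ω1.cof = Cardinal.aleph 1 := Cardinal.isRegular_aleph_one.cof_eq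
  have hlim2 : Order.IsSuccLimit ω2 := Cardinal.isSuccLimit_ord (Cardinal.aleph0_le_aleph 2)
  have hlim1 : Order.IsSuccLimit ω1 := Cardinal.isSuccLimit_ord (Cardinal.aleph0_le_aleph 1)
  have hsucc2 : ∀ β, β < ω2 → β + 1 < ω2 := fun β hβ => by
    rw [Ordinal.add_one_eq_succ]; exact hlim2.succ_lt hβ
  have hsucc1 : ∀ β, β < ω1 → β + 1 < ω1 := fun β hβ => by
    rw [Ordinal.add_one_eq_succ]; exact hlim1.succ_lt hβ
  have h12 : Cardinal.aleph 1 < Cardinal.aleph 2 :=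
    Cardinal.aleph_lt_aleph.2 one_lt_two
  have haleph01 : Cardinal.aleph0 < ω1.cof := by
    rw [hcof1]; exact Cardinal.aleph0_lt_aleph_one
  have haleph02 : Cardinal.aleph0 < ω2.cof := by
    rw [hcof2]; exact Cardinal.aleph0_lt_aleph_one.trans h12
  -- traces of countable sets are countable and bounded
  have htc : ∀ X : Set H, X.Countable → (otr oe ω2 X).Countable := fun X hX =>
    (hX.preimage hoe).mono fun α hα => hα.2
  have hbdd : ∀ X : Set H, X.Countable → BddAbove (otr oe ω2 X) := fun X hX => by
    haveI := (htc X hX).to_subtype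
    exact Ordinal.bddAbove_of_small
  -- the step function
  set h0 : Ordinal → Ordinal := fun β => sSup (otr oe ω2 (F (β + 1))) + 1 with h0def
  have h0sup : ∀ β, sSup (otr oe ω2 (F (β + 1))) < h0 β := fun β => lt_add_one_ord _
  have h0lt : ∀ β, β < ω2 → β < h0 β := by
    intro β hβ
    have h1 := hFsup (β + 1) (hsucc2 β hβ)
    exact lt_of_lt_of_le (lt_add_one_ord β) (h1.trans (h0sup β).le)
  have h0small : ∀ β, β < ω2 → h0 β < ω2 := by
    intro β hβ
    have h1 : sSup (otr oe ω2 (F (β + 1))) < ω2 :=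
      sSup_lt_of_countable haleph02 (htc _ (hFc _ (hsucc2 β hβ))) (fun x hx => hx.1)
    exact hsucc2 _ h1
  -- the chain
  set B : Ordinal → Ordinal := chainB h0 with hBdef
  have hBe : ∀ ν, B ν = Ordinal.bsup ν (fun μ _ => h0 (B μ)) := chainB_eq h0
  have hBlt : ∀ ν, ν ≤ ω1 → B ν < ω2 := by
    intro ν
    induction ν using Ordinal.induction with
    | _ ν ih =>
      intro hν
      rw [hBe]
      refine Ordinal.bsup_lt_ord ?_ (fun μ hμ => h0small _ (ih μ hμ ((hμ.trans_le hν).le)))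
      calc ν.card ≤ ω1.card := Ordinal.card_le_card hν
        _ = Cardinal.aleph 1 := Cardinal.card_ord _
        _ < ω2.cof := by rw [hcof2]; exact h12
  have hBle : ∀ μ ν, μ < ν → h0 (B μ) ≤ B ν := fun μ ν h => by
    rw [hBe ν]; exact Ordinal.le_bsup _ μ h
  have hBmono : ∀ μ ν, μ < ν → ν ≤ ω1 → B μ < B ν := fun μ ν h hν =>
    lt_of_lt_of_le (h0lt _ (hBlt μ ((h.trans_le hν).le))) (hBle μ ν h)
  have hδ2 : B ω1 < ω2 := hBlt ω1 le_rfl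
  -- witnesses above each β
  have hgam : ∀ β, β < ω2 → ∃ γ, γ ∈ otr oe ω2 (F (β + 1)) ∧ β < γ := by
    intro β hβ
    by_contra hcon
    push_neg at hcon
    have h1 := hFsup (β + 1) (hsucc2 β hβ)
    have h2 : sSup (otr oe ω2 (F (β + 1))) ≤ β := by
      rcases (otr oe ω2 (F (β + 1))).eq_empty_or_nonempty with he | hne
      · rw [he]; simpa [csSup_empty] using Ordinal.zero_le β
      · exact csSup_le hne hcon
    exact absurd (h1.trans h2) (not_le.2 (lt_add_one_ord β))
  choose! g hg1 hg2 using hgam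
  -- an element of the trace of F (B ω1) at or above B ω1
  have hbig : ∃ γb, γb ∈ otr oe ω2 (F (B ω1)) ∧ B ω1 ≤ γb := by
    by_contra hcon
    push_neg at hcon
    have hidx : ∀ t ∈ otr oe ω2 (F (B ω1)), ∃ μ, μ < ω1 ∧ t < h0 (B μ) := by
      intro t ht
      have h1 := hcon t ht
      rw [hBe ω1] at h1
      obtain ⟨μ, hμ, hlt⟩ := (Ordinal.lt_bsup _).1 h1
      exact ⟨μ, hμ, hlt⟩
    choose! idx hidx1 hidx2 using hidx
    have hSc : (idx '' otr oe ω2 (F (B ω1))).Countable := (htc _ (hFc _ hδ2)).image idx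
    have hSlt : sSup (idx '' otr oe ω2 (F (B ω1))) < ω1 :=
      sSup_lt_of_countable haleph01 hSc (by rintro x ⟨t, ht, rfl⟩; exact hidx1 t ht)
    set ρ : Ordinal := sSup (idx '' otr oe ω2 (F (B ω1))) + 1 with hρdef
    have hρ : ρ < ω1 := hsucc1 _ hSlt
    have hSbdd : BddAbove (idx '' otr oe ω2 (F (B ω1))) := by
      haveI := hSc.to_subtype
      exact Ordinal.bddAbove_of_small
    have hub : ∀ t ∈ otr oe ω2 (F (B ω1)), t < B ρ := by
      intro t ht
      have h1 : idx t ≤ sSup (idx '' otr oe ω2 (F (B ω1))) :=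
        le_csSup hSbdd (Set.mem_image_of_mem _ ht)
      exact lt_of_lt_of_le (hidx2 t ht)
        (hBle (idx t) ρ (h1.trans_lt (lt_add_one_ord _)))
    have h2 : sSup (otr oe ω2 (F (B ω1))) ≤ B ρ := by
      rcases (otr oe ω2 (F (B ω1))).eq_empty_or_nonempty with he | hne
      · rw [he]; simpa [csSup_empty] using Ordinal.zero_le (B ρ)
      · exact csSup_le hne (fun t ht => (hub t ht).le)
    have h3 := hFsup (B ω1) hδ2
    exact absurd (h3.trans h2) (not_le.2 (hBmono ρ ω1 hρ le_rfl))
  obtain ⟨γb, hγb, hγbge⟩ := hbig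
  -- a witness avoiding the trace of F (B ω1)
  have hexists : ∃ μ, μ < ω1 ∧ g (B μ) ∉ otr oe ω2 (F (B ω1)) := by
    by_contra hcon
    push_neg at hcon
    have hmonoγ : ∀ μ ν : Ordinal, μ < ν → ν < ω1 → g (B μ) < g (B ν) := by
      intro μ ν h hν
      have hμ2 : B μ < ω2 := hBlt μ (h.trans hν).le
      have hν2 : B ν < ω2 := hBlt ν hν.le
      have e1 : g (B μ) ≤ sSup (otr oe ω2 (F (B μ + 1))) :=
        le_csSup (hbdd _ (hFc _ (hsucc2 _ hμ2))) (hg1 _ hμ2)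
      have e2 : sSup (otr oe ω2 (F (B μ + 1))) < h0 (B μ) := h0sup _
      have e3 : h0 (B μ) ≤ B ν := hBle μ ν h
      exact e1.trans_lt ((e2.trans_le e3).trans (hg2 _ hν2))
    have hinj : Function.Injective
        (fun μ : Set.Iio ω1 =>
          (⟨g (B μ.1), hcon μ.1 μ.2⟩ : ↥(otr oe ω2 (F (B ω1))))) := by
      intro a b hab
      have hab' : g (B a.1) = g (B b.1) := congrArg Subtype.val hab
      rcases lt_trichotomy a.1 b.1 with h | h | h
      · exact absurd hab' (hmonoγ a.1 b.1 h b.2).ne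
      · exact Subtype.ext h
      · exact absurd hab'.symm (hmonoγ b.1 a.1 h a.2).ne
    haveI := (htc _ (hFc _ hδ2)).to_subtype
    haveI hcnt : Countable ↥(Set.Iio ω1) := hinj.countable
    have hmk : Cardinal.mk ↥(Set.Iio ω1) ≤ Cardinal.aleph0 := Cardinal.mk_le_aleph0
    rw [Ordinal.mk_Iio_ordinal, show ω1.card = Cardinal.aleph 1 from Cardinal.card_ord _,
      Cardinal.lift_le_aleph0] at hmk
    exact absurd hmk (not_le.2 Cardinal.aleph0_lt_aleph_one)
  obtain ⟨μs, hμs1, hμs2⟩ := hexists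
  have hBμ2 : B μs < ω2 := hBlt μs hμs1.le
  have hBμ12 : B μs + 1 < ω2 := hsucc2 _ hBμ2
  refine ⟨F (B μs + 1), F (B ω1), hFc _ hBμ12, hFc _ hδ2, hFe _ hBμ12, hFe _ hδ2,
    hFsq _ hBμ12, hFsq _ hδ2, ?_, ?_⟩
  · intro hsub
    exact hμs2 (hsub (hg1 _ hBμ2))
  · intro hsub
    have h1 := hsub hγb
    have h2 : γb ≤ sSup (otr oe ω2 (F (B μs + 1))) := le_csSup (hbdd _ (hFc _ hBμ12)) h1
    have h3 : sSup (otr oe ω2 (F (B μs + 1))) < h0 (B μs) := h0sup _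
    have h4 : h0 (B μs) ≤ B ω1 := hBle μs ω1 hμs1
    exact absurd ((h2.trans_lt h3).trans_le h4) (not_lt.2 hγbge)
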